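/- Let T : ℝ → ℝ be defined by T(x) = x/(1-x) if x ≤ 1/2 and T(x) = (2x-1)/x if x > 1/2. If x ∈ (0,1) is a periodic point of T, i.e. there exists m ≥ 1 with T^[m](x) = x, then x is a quadratic irrational: x is irrational and there exist integers a, b, c with a ≠ 0 such that a·x² + b·x + c = 0. -/

import Mathlib

noncomputable def T : ℝ → ℝ := fun x => if x ≤ 1/2 then x / (1 - x) else (2*x - 1) / x

lemma T_mem {y : ℝ} (h0 : 0 < y) (h1 : y < 1) (hne : y ≠ 1/2) : 0 < T y ∧ T y < 1 := by
  unfold T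
  split_ifs with h
  · have hlt : y < 1/2 := lt_of_le_of_ne h hne
    have h2 : 0 < 1 - y := by linarith
    constructor
    · positivity
    · rw [div_lt_one h2]; linarith
  · push_neg at h
    constructor
    · apply div_pos (by linarith) (by linarith)
    · rw [div_lt_one (by linarith)]; linarith

lemma T_rat_descent (q : ℚ) (h0 : 0 < q) (h1 : q < 1) (hne : q ≠ 1/2) :
    ∃ q' : ℚ, (q' : ℝ) = T (q:ℝ) ∧ 0 < q' ∧ q' < 1 ∧ q'.den < q.den := by
  have hdpos : (0:ℚ) < (q.den : ℚ) := by exact_mod_cast q.pos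
  have hnum : ((q.num : ℚ)) / (q.den : ℚ) = q := Rat.num_div_den q
  have hnpos : 0 < q.num := Rat.num_pos.mpr h0
  set n := q.num.natAbs with hn_def
  have hn : (n : ℤ) = q.num := Int.natAbs_of_nonneg hnpos.le
  have hncast : ((n : ℚ)) = (q.num : ℚ) := by rw [← hn]; push_cast; ring
  have hnumq : ((n : ℚ)) / (q.den : ℚ) = q := by rw [hncast]; exact hnum
  have hnlt : n < q.den := by
    have : (n : ℚ) < (q.den : ℚ) := by
      rw [← hnumq] at h1
      rwa [div_lt_one hdpos] at h1
    exact_mod_cast this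
  have hnpos' : 0 < n := by omega
  have hcast : (q : ℝ) = (n : ℝ) / (q.den : ℝ) := by
    rw [Rat.cast_def, ← hn]; push_cast; ring
  have hdne : ((q.den : ℝ)) ≠ 0 := by positivity
  have h0R : (0:ℝ) < (q:ℝ) := by exact_mod_cast h0
  have h1R : (q:ℝ) < 1 := by exact_mod_cast h1
  have hneR : (q:ℝ) ≠ 1/2 := by
    intro h
    apply hne
    have : (q:ℝ) = ((1/2 : ℚ) : ℝ) := by rw [h]; norm_num
    exact_mod_cast this
  obtain ⟨hT0, hT1⟩ := T_mem h0R h1R hneR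
  rcases lt_or_gt_of_ne hne with hlt | hgt
  · -- q < 1/2, T q = q/(1-q)
    have h2 : 2 * n < q.den := by
      have h2q : (n : ℚ) * 2 < (q.den : ℚ) := by
        rw [← hnumq] at hlt
        rw [div_lt_iff₀ hdpos] at hlt
        linarith
      have : ((2 * n : ℕ) : ℚ) < ((q.den : ℕ) : ℚ) := by push_cast; linarith
      exact_mod_cast this
    have hco2 : (n : ℕ).Coprime (q.den - n) := by
      have h := q.reduced
      rw [← hn_def] at h
      have heq : q.den = (q.den - n) + n := by omega
      rw [heq] at h
      exact (Nat.coprime_add_self_right).mp h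
    set q' : ℚ := Rat.mk' (n : ℤ) (q.den - n) (by omega) (by simpa using hco2) with hq'
    have hcast' : (q' : ℝ) = T (q:ℝ) := by
      have hleR : (q:ℝ) ≤ 1/2 := by
        have : (q:ℝ) < ((1/2:ℚ):ℝ) := by exact_mod_cast hlt
        norm_num at this
        linarith
      have hTq : T (q:ℝ) = (q:ℝ) / (1 - q) := by
        simp only [T]
        rw [if_pos hleR]
      rw [hTq, Rat.cast_def]
      show ((n:ℤ):ℝ) / ((q.den - n : ℕ):ℝ) = _
      rw [hcast]
      have hsub : ((q.den - n : ℕ):ℝ) = (q.den : ℝ) - n := by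
        push_cast [Nat.cast_sub hnlt.le]; ring
      rw [hsub]
      have h3 : (q.den : ℝ) - n ≠ 0 := by
        have : (n:ℝ) < q.den := by exact_mod_cast hnlt
        linarith
      push_cast
      field_simp
    refine ⟨q', hcast', ?_, ?_, ?_⟩
    · have : (0:ℝ) < (q':ℝ) := by rw [hcast']; exact hT0
      exact_mod_cast this
    · have : (q':ℝ) < 1 := by rw [hcast']; exact hT1
      exact_mod_cast this
    · show q.den - n < q.den
      omega
  · -- q > 1/2, T q = (2q-1)/q
    have h2 : q.den < 2 * n := by
      have h2q : (q.den : ℚ) < (n : ℚ) * 2 := by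
        rw [← hnumq] at hgt
        rw [lt_div_iff₀ hdpos] at hgt
        linarith
      have : ((q.den : ℕ) : ℚ) < ((2 * n : ℕ) : ℚ) := by push_cast; linarith
      exact_mod_cast this
    set m : ℕ := 2 * n - q.den with hm_def
    have hmpos : 0 < m := by omega
    have hco2 : Nat.Coprime m n := by
      have h := q.reduced
      rw [← hn_def] at h
      have hgd : Nat.gcd m n ∣ q.den := by
        have h1' : Nat.gcd m n ∣ 2 * n := Dvd.dvd.mul_left (Nat.gcd_dvd_right m n) 2
        have h2' : Nat.gcd m n ∣ m := Nat.gcd_dvd_left m n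
        have : q.den = 2 * n - m := by omega
        rw [this]
        exact Nat.dvd_sub h1' h2'
      have : Nat.gcd m n ∣ 1 := by
        rw [← h]
        exact Nat.dvd_gcd (Nat.gcd_dvd_right m n) hgd
      exact Nat.dvd_one.mp this
    set q' : ℚ := Rat.mk' (m : ℤ) n (by omega) (by simpa using hco2) with hq'
    have hcast' : (q' : ℝ) = T (q:ℝ) := by
      have hgtR : ¬ ((q:ℝ) ≤ 1/2) := by
        push_neg
        have : ((1/2:ℚ):ℝ) < (q:ℝ) := by exact_mod_cast hgt
        norm_num at this
        linarith
      have hTq : T (q:ℝ) = (2*(q:ℝ) - 1) / (q:ℝ) := by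
        simp only [T]
        rw [if_neg hgtR]
      rw [hTq, Rat.cast_def]
      show ((m:ℤ):ℝ) / ((n : ℕ):ℝ) = _
      rw [hcast]
      have hsub : ((m : ℕ):ℝ) = 2*(n : ℝ) - q.den := by
        rw [hm_def]
        push_cast [Nat.cast_sub h2.le]
        ring
      push_cast
      rw [hsub]
      have hnne : (n:ℝ) ≠ 0 := by positivity
      field_simp
    refine ⟨q', hcast', ?_, ?_, ?_⟩
    · have : (0:ℝ) < (q':ℝ) := by rw [hcast']; exact hT0
      exact_mod_cast this
    · have : (q':ℝ) < 1 := by rw [hcast']; exact hT1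
      exact_mod_cast this
    · show n < q.den
      exact hnlt

lemma T_iter_one : ∀ k : ℕ, T^[k] (1:ℝ) = 1 := by
  intro k
  induction k with
  | zero => simp
  | succ n ih =>
    rw [Function.iterate_succ_apply', ih]
    norm_num [T]

lemma no_rat_per : ∀ n : ℕ, ∀ q : ℚ, q.den ≤ n → 0 < q → q < 1 →
    ∀ m : ℕ, 1 ≤ m → T^[m] (q:ℝ) ≠ (q:ℝ) := by
  intro n
  induction n using Nat.strong_induction_on with
  | _ n ih =>
    intro q hden h0 h1 m hm hper
    by_cases hne : q = 1/2
    · have hq2 : (q:ℝ) = 1/2 := by rw [hne]; norm_num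
      have hT : T (q:ℝ) = 1 := by rw [hq2]; norm_num [T]
      obtain ⟨m', rfl⟩ : ∃ m', m = m' + 1 := ⟨m - 1, by omega⟩
      rw [Function.iterate_succ_apply, hT, T_iter_one] at hper
      rw [hq2] at hper
      norm_num at hper
    · obtain ⟨q', hq'cast, hq'0, hq'1, hq'den⟩ := T_rat_descent q h0 h1 hne
      have hper' : T^[m] (q':ℝ) = (q':ℝ) := by
        rw [hq'cast]
        calc T^[m] (T (q:ℝ)) = T^[m+1] (q:ℝ) := (Function.iterate_succ_apply T m (q:ℝ)).symm
          _ = T (T^[m] (q:ℝ)) := Function.iterate_succ_apply' T m (q:ℝ)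
          _ = T (q:ℝ) := by rw [hper]
      exact ih q'.den (by omega) q' le_rfl hq'0 hq'1 m hm hper'

lemma periodic_irrational (x : ℝ) (hx0 : 0 < x) (hx1 : x < 1)
    (m : ℕ) (hm : 1 ≤ m) (hper : T^[m] x = x) : Irrational x := by
  rintro ⟨q, rfl⟩
  have h0 : 0 < q := by exact_mod_cast hx0
  have h1 : q < 1 := by exact_mod_cast hx1
  exact no_rat_per q.den q le_rfl h0 h1 m hm hper

lemma irr_ne_half {y : ℝ} (hirr : Irrational y) : y ≠ 1/2 := by
  intro h
  exact hirr ⟨1/2, by rw [h]; norm_num⟩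

lemma T_irr {y : ℝ} (h0 : 0 < y) (h1 : y < 1) (hirr : Irrational y) :
    Irrational (T y) := by
  have hne : y ≠ 1/2 := irr_ne_half hirr
  have hyne : y ≠ 0 := ne_of_gt h0
  unfold T
  split_ifs with h
  · have hlt : y < 1/2 := lt_of_le_of_ne h hne
    have h2 : (1:ℝ) - y ≠ 0 := by intro hh; nlinarith
    rintro ⟨r, hr⟩
    have hrpos : (0:ℝ) < (r:ℝ) := by
      rw [hr]
      apply div_pos h0 (by linarith)
    have hy : y = (r:ℝ) / (1 + (r:ℝ)) := by
      have hkey : (r:ℝ) * (1 - y) = y := by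
        rw [hr]; field_simp
      have h3 : (1:ℝ) + (r:ℝ) ≠ 0 := by linarith
      field_simp
      linarith [hkey]
    exact hirr ⟨r / (1 + r), by rw [hy]; push_cast [Rat.cast_div]; norm_num⟩
  · push_neg at h
    rintro ⟨r, hr⟩
    have hkey : (r:ℝ) * y = 2*y - 1 := by
      rw [hr]; field_simp
    have h2 : (2:ℝ) - (r:ℝ) ≠ 0 := by
      intro hh
      have : (r:ℝ) = 2 := by linarith
      rw [this] at hkey
      linarith
    have hy : y = 1 / (2 - (r:ℝ)) := by
      field_simp
      linarith [hkey]
    exact hirr ⟨1 / (2 - r), by rw [hy]; push_cast; norm_num⟩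

lemma orbit_facts (x : ℝ) (hx0 : 0 < x) (hx1 : x < 1) (hirr : Irrational x) :
    ∀ k : ℕ, 0 < T^[k] x ∧ T^[k] x < 1 ∧ Irrational (T^[k] x) := by
  intro k
  induction k with
  | zero => exact ⟨hx0, hx1, hirr⟩
  | succ n ih =>
    obtain ⟨h0, h1, hi⟩ := ih
    rw [Function.iterate_succ_apply']
    obtain ⟨a, b⟩ := T_mem h0 h1 (irr_ne_half hi)
    exact ⟨a, b, T_irr h0 h1 hi⟩

lemma t_step {y : ℝ} (h0 : 0 < y) (h1 : y < 1) (hirr : Irrational y) :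
    ∃ b c : ℕ, b + c = 1 ∧
      (1 - y)/y = (((1 - T y)/(T y)) + (b:ℝ)) / ((c:ℝ) * ((1 - T y)/(T y)) + 1) := by
  have hne : y ≠ 1/2 := irr_ne_half hirr
  have hyne : y ≠ 0 := ne_of_gt h0
  obtain ⟨hT0, hT1⟩ := T_mem h0 h1 hne
  rcases lt_or_gt_of_ne hne with hlt | hgt
  · refine ⟨1, 0, rfl, ?_⟩
    have hTy : T y = y / (1 - y) := by
      simp only [T]; rw [if_pos hlt.le]
    rw [hTy]
    have h2 : (1:ℝ) - y ≠ 0 := by intro hh; nlinarith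
    have h3 : y / (1 - y) ≠ 0 := by
      apply div_ne_zero hyne h2
    push_cast
    field_simp
    rw [mul_zero, zero_add, mul_div_cancel_left₀ _ hyne]; ring
  · refine ⟨0, 1, rfl, ?_⟩
    have hTy : T y = (2*y - 1) / y := by
      simp only [T]; rw [if_neg (not_le.mpr hgt)]
    have hTyne : T y ≠ 0 := ne_of_gt hT0
    have hden : (1:ℝ) * ((1 - T y)/(T y)) + 1 ≠ 0 := by
      have : 0 < (1 - T y)/(T y) := div_pos (by linarith) hT0
      linarith
    rw [hTy] at hTyne ⊢
    have h2 : 2*y - 1 ≠ 0 := by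
      intro hh
      apply hne
      linarith
    push_cast
    have hden2 : 1 * ((1 - (2*y-1)/y)/((2*y-1)/y)) + 1 ≠ 0 := by
      rw [← hTy]; exact hden
    have hk : 1 - (2*y-1)/y = (1-y)/y := by field_simp; ring
    rw [hk, div_div_div_cancel_right₀ hyne, add_zero, one_mul, div_add_one h2,
      div_div_div_cancel_right₀ h2]
    congr 1
    ring

lemma rel_lemma (x : ℝ) (hx0 : 0 < x) (hx1 : x < 1) (hirr : Irrational x) :
    ∀ k : ℕ, ∃ a b c d : ℕ, a * d = b * c + 1 ∧ 1 ≤ a ∧ 1 ≤ d ∧ (1 ≤ k → 1 ≤ b + c) ∧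
      (1 - x)/x = ((a:ℝ) * ((1 - T^[k] x)/(T^[k] x)) + (b:ℝ)) /
        ((c:ℝ) * ((1 - T^[k] x)/(T^[k] x)) + (d:ℝ)) := by
  intro k
  induction k with
  | zero =>
    refine ⟨1, 0, 0, 1, by norm_num, le_refl 1, le_refl 1, by omega, ?_⟩
    simp
  | succ n ih =>
    obtain ⟨a, b, c, d, hdet, ha, hd, _, heq⟩ := ih
    obtain ⟨h0, h1, hi⟩ := orbit_facts x hx0 hx1 hirr n
    obtain ⟨b', c', hbc', hstep⟩ := t_step h0 h1 hi
    have hiter : T^[n+1] x = T (T^[n] x) := Function.iterate_succ_apply' T n x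
    set s : ℝ := (1 - T^[n] x)/(T^[n] x) with hs_def
    set s' : ℝ := (1 - T (T^[n] x))/(T (T^[n] x)) with hs'_def
    obtain ⟨h0', h1', _⟩ := orbit_facts x hx0 hx1 hirr (n+1)
    rw [hiter] at h0' h1'
    have hspos : 0 < s := div_pos (by linarith) h0
    have hs'pos : 0 < s' := div_pos (by linarith) h0'
    rcases (by omega : b' = 1 ∧ c' = 0 ∨ b' = 0 ∧ c' = 1) with ⟨rfl, rfl⟩ | ⟨rfl, rfl⟩
    · -- s = s' + 1
      have hs : s = s' + 1 := by
        rw [hstep]; push_cast; field_simp; ring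
      refine ⟨a, a + b, c, c + d, ?_, ha, by omega, by omega, ?_⟩
      · calc a * (c + d) = a * c + a * d := by ring
          _ = a * c + (b * c + 1) := by rw [hdet]
          _ = (a + b) * c + 1 := by ring
      · rw [hiter, ← hs'_def, heq, hs]
        congr 1 <;> push_cast <;> ring
    · -- s = s'/(s'+1)
      have hs : s = s' / (s' + 1) := by
        rw [hstep]; push_cast; field_simp; ring
      refine ⟨a + b, b, c + d, d, ?_, by omega, hd, by omega, ?_⟩
      · calc (a + b) * d = a * d + b * d := by ring
          _ = b * c + 1 + b * d := by rw [hdet]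
          _ = b * (c + d) + 1 := by ring
      · rw [hiter, ← hs'_def, heq, hs]
        have h1ne : s' + 1 ≠ 0 := by linarith
        have hdenne : (c:ℝ) * (s'/(s'+1)) + d ≠ 0 := by
          have hnn : 0 ≤ (c:ℝ) * (s'/(s'+1)) :=
            mul_nonneg (Nat.cast_nonneg c) (le_of_lt (div_pos hs'pos (by linarith)))
          have : (1:ℝ) ≤ (d:ℝ) := by exact_mod_cast hd
          linarith
        have hdenne2 : ((c:ℝ) + d) * s' + d ≠ 0 := by
          have hnn : 0 ≤ ((c:ℝ) + d) * s' :=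
            mul_nonneg (by positivity) hs'pos.le
          have : (1:ℝ) ≤ (d:ℝ) := by exact_mod_cast hd
          linarith
        push_cast
        field_simp
        ring

theorem stmt5 (x : ℝ) (hx : x ∈ Set.Ioo (0:ℝ) 1)
    (hper : ∃ m : ℕ, 1 ≤ m ∧ T^[m] x = x) :
    Irrational x ∧ ∃ a b c : ℤ, a ≠ 0 ∧ (a : ℝ) * x^2 + (b : ℝ) * x + (c : ℝ) = 0 := by
  obtain ⟨hx0, hx1⟩ := hx
  obtain ⟨m, hm, hperm⟩ := hper
  have hirr : Irrational x := periodic_irrational x hx0 hx1 m hm hperm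
  refine ⟨hirr, ?_⟩
  obtain ⟨a, b, c, d, hdet, ha, hd, hbc, heq⟩ := rel_lemma x hx0 hx1 hirr m
  rw [hperm] at heq
  have hbc' : 1 ≤ b + c := hbc hm
  set t : ℝ := (1 - x)/x with ht_def
  have htpos : 0 < t := div_pos (by linarith) hx0
  have hdenpos : 0 < (c:ℝ) * t + d := by
    have h1 : 0 ≤ (c:ℝ) * t := mul_nonneg (Nat.cast_nonneg c) htpos.le
    have h2 : (1:ℝ) ≤ (d:ℝ) := by exact_mod_cast hd
    linarith
  have hkey : t * ((c:ℝ) * t + d) = (a:ℝ) * t + b := by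
    have h := heq
    rw [eq_div_iff (ne_of_gt hdenpos)] at h
    exact h
  -- c ≠ 0
  have hc : 1 ≤ c := by
    by_contra hc0
    have hc0' : c = 0 := by omega
    subst hc0'
    have had : a = 1 ∧ d = 1 := by
      constructor <;> nlinarith [hdet]
    obtain ⟨rfl, rfl⟩ := had
    simp at hkey
    have hb0 : (b:ℝ) = 0 := by linarith
    have : b = 0 := by exact_mod_cast hb0
    omega
  -- leading coefficient nonzero
  refine ⟨(a:ℤ) + c - b - d, (d:ℤ) - a - 2*c, (c:ℤ), ?_, ?_⟩
  · intro hA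
    have hdetZ : (a:ℤ) * d = b * c + 1 := by exact_mod_cast hdet
    set s : ℤ := (a:ℤ) - b with hs_def
    have hdz : (d:ℤ) = c + s := by omega
    have hkeyZ : s * ((b:ℤ) + c + s) = 1 := by
      have haz : (a:ℤ) = b + s := by omega
      rw [haz, hdz] at hdetZ
      linear_combination hdetZ
    have hbcZ : 1 ≤ (b:ℤ) + c := by exact_mod_cast hbc'
    rcases Int.isUnit_iff.mp (IsUnit.of_mul_eq_one (a := s) _ hkeyZ) with h1 | h1 <;>
      · rw [h1] at hkeyZ; nlinarith [hkeyZ]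
  · have hxne : x ≠ 0 := ne_of_gt hx0
    have hkey2 : (1 - x) * ((c:ℝ) * (1 - x) + (d:ℝ) * x) =
        ((a:ℝ) * (1 - x) + (b:ℝ) * x) * x := by
      have := hkey
      rw [ht_def] at this
      field_simp at this
      apply mul_right_cancel₀ hxne
      linear_combination x * this
    push_cast
    linear_combination hkey2
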